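/- Let d ∈ ℕ and let n⁻', n⁻, n⁺', n⁺, n⁰ ∈ ℕ^p satisfy n⁻' ≤ n⁻ and n⁺' ≤ n⁺ componentwise. Then k_d(n⁻', n⁰, n⁺') ≤ k_d(n⁻, n⁰, n⁺): the BART sub-correlation function is monotonically non-decreasing in the exterior split counts. -/

import Mathlib

/-- Total weight `W(v) = Σ_{i : v_i ≠ 0} w_i` of the axes with at least one available split. -/
noncomputable def bartW (p : ℕ) (w : Fin p → ℝ) (v : Fin p → ℕ) : ℝ :=
  ∑ i ∈ Finset.univ.filter (fun i => v i ≠ 0), w i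

/-- The BART sub-correlation function `k_d(n⁻, n⁰, n⁺)`, defined by well-founded recursion
on `Σ_i (n⁻_i + n⁺_i)`. -/
noncomputable def bartK (p : ℕ) (w : Fin p → ℝ) (P : ℕ → ℝ)
    (d : ℕ) (nm n0 np : Fin p → ℕ) : ℝ :=
  if ∀ i, nm i + n0 i + np i = 0 then 1
  else
    1 - P d * (1 - (1 / bartW p w (fun i => nm i + n0 i + np i)) *
      ∑ i ∈ Finset.univ.filter (fun i => nm i + n0 i + np i ≠ 0),
        (w i / ((nm i + n0 i + np i : ℕ) : ℝ)) *
          ((∑ k ∈ (Finset.range (nm i)).attach,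
              bartK p w P (d+1) (Function.update nm i k.1) n0 np) +
           (∑ k ∈ (Finset.range (np i)).attach,
              bartK p w P (d+1) nm n0 (Function.update np i k.1))))
termination_by ∑ i, (nm i + np i)
decreasing_by
  · have hk : k.1 < nm i := Finset.mem_range.mp k.2
    refine Finset.sum_lt_sum (fun j _ => ?_) ⟨i, Finset.mem_univ i, ?_⟩
    · rcases eq_or_ne j i with rfl | hj
      · simp only [Function.update_self]; omega
      · simp only [Function.update_of_ne hj]; omega
    · simp only [Function.update_self]; omega
  · have hk : k.1 < np i := Finset.mem_range.mp k.2
    refine Finset.sum_lt_sum (fun j _ => ?_) ⟨i, Finset.mem_univ i, ?_⟩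
    · rcases eq_or_ne j i with rfl | hj
      · simp only [Function.update_self]; omega
      · simp only [Function.update_of_ne hj]; omega
    · simp only [Function.update_self]; omega


variable {p : ℕ} {w : Fin p → ℝ} {P : ℕ → ℝ}

lemma attachM (d : ℕ) (nm n0 np : Fin p → ℕ) (i : Fin p) :
    (∑ k ∈ (Finset.range (nm i)).attach, bartK p w P d (Function.update nm i k.1) n0 np)
      = ∑ k ∈ Finset.range (nm i), bartK p w P d (Function.update nm i k) n0 np :=
  Finset.sum_attach _ (fun k => bartK p w P d (Function.update nm i k) n0 np)

lemma attachP (d : ℕ) (nm n0 np : Fin p → ℕ) (i : Fin p) :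
    (∑ k ∈ (Finset.range (np i)).attach, bartK p w P d nm n0 (Function.update np i k.1))
      = ∑ k ∈ Finset.range (np i), bartK p w P d nm n0 (Function.update np i k) :=
  Finset.sum_attach _ (fun k => bartK p w P d nm n0 (Function.update np i k))

lemma bartK_eq (d : ℕ) (nm n0 np : Fin p → ℕ) (h : ¬ ∀ i, nm i + n0 i + np i = 0) :
    bartK p w P d nm n0 np = 1 - P d * (1 - (1 / bartW p w (fun i => nm i + n0 i + np i)) *
      ∑ i ∈ Finset.univ.filter (fun i => nm i + n0 i + np i ≠ 0),
        (w i / ((nm i + n0 i + np i : ℕ) : ℝ)) *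
          ((∑ k ∈ Finset.range (nm i), bartK p w P (d+1) (Function.update nm i k) n0 np) +
           (∑ k ∈ Finset.range (np i), bartK p w P (d+1) nm n0 (Function.update np i k)))) := by
  conv_lhs => rw [bartK]
  rw [if_neg h]
  simp only [attachM, attachP]

lemma bartK_eq_one (d : ℕ) (nm n0 np : Fin p → ℕ) (h : ∀ i, nm i + n0 i + np i = 0) :
    bartK p w P d nm n0 np = 1 := by
  rw [bartK, if_pos h]

lemma bartW_pos (hw : ∀ i, 0 < w i) (v : Fin p → ℕ) (h : ¬ ∀ i, v i = 0) :
    0 < bartW p w v := by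
  push_neg at h
  obtain ⟨i, hi⟩ := h
  refine Finset.sum_pos (fun j _ => hw j) ⟨i, ?_⟩
  simp [hi]

lemma bartK_bounds (hw : ∀ i, 0 < w i) (hP : ∀ d, P d ∈ Set.Icc (0:ℝ) 1) :
    ∀ N : ℕ, ∀ d nm n0 np, (∑ i, (nm i + np i)) = N →
      0 ≤ bartK p w P d nm n0 np ∧ bartK p w P d nm n0 np ≤ 1 := by
  intro N
  induction N using Nat.strong_induction_on with
  | _ N IH =>
  intro d nm n0 np hN
  by_cases hz : ∀ i, nm i + n0 i + np i = 0
  · rw [bartK_eq_one _ _ _ _ hz]; norm_num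
  · rw [bartK_eq _ _ _ _ hz]
    have hW : 0 < bartW p w (fun i => nm i + n0 i + np i) := by
      apply bartW_pos hw
      simpa using hz
    set F := Finset.univ.filter (fun i => nm i + n0 i + np i ≠ 0) with hF
    have hterm : ∀ i ∈ F, 0 ≤ (w i / ((nm i + n0 i + np i : ℕ) : ℝ)) *
          ((∑ k ∈ Finset.range (nm i), bartK p w P (d+1) (Function.update nm i k) n0 np) +
           (∑ k ∈ Finset.range (np i), bartK p w P (d+1) nm n0 (Function.update np i k))) ∧
        (w i / ((nm i + n0 i + np i : ℕ) : ℝ)) *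
          ((∑ k ∈ Finset.range (nm i), bartK p w P (d+1) (Function.update nm i k) n0 np) +
           (∑ k ∈ Finset.range (np i), bartK p w P (d+1) nm n0 (Function.update np i k))) ≤ w i := by
      intro i hi
      have hni : nm i + n0 i + np i ≠ 0 := by simpa [hF] using hi
      have hnpos : (0:ℝ) < ((nm i + n0 i + np i : ℕ) : ℝ) := by
        exact_mod_cast Nat.pos_of_ne_zero hni
      have hMrec : ∀ k ∈ Finset.range (nm i),
          0 ≤ bartK p w P (d+1) (Function.update nm i k) n0 np ∧
          bartK p w P (d+1) (Function.update nm i k) n0 np ≤ 1 := by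
        intro k hk
        have hk' : k < nm i := Finset.mem_range.mp hk
        refine IH (∑ j, (Function.update nm i k j + np j)) ?_ _ _ _ _ rfl
        rw [← hN]
        refine Finset.sum_lt_sum (fun j _ => ?_) ⟨i, Finset.mem_univ i, ?_⟩
        · rcases eq_or_ne j i with rfl | hj
          · simp only [Function.update_self]; omega
          · simp only [Function.update_of_ne hj]; omega
        · simp only [Function.update_self]; omega
      have hPrec : ∀ k ∈ Finset.range (np i),
          0 ≤ bartK p w P (d+1) nm n0 (Function.update np i k) ∧
          bartK p w P (d+1) nm n0 (Function.update np i k) ≤ 1 := by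
        intro k hk
        have hk' : k < np i := Finset.mem_range.mp hk
        refine IH (∑ j, (nm j + Function.update np i k j)) ?_ _ _ _ _ rfl
        rw [← hN]
        refine Finset.sum_lt_sum (fun j _ => ?_) ⟨i, Finset.mem_univ i, ?_⟩
        · rcases eq_or_ne j i with rfl | hj
          · simp only [Function.update_self]; omega
          · simp only [Function.update_of_ne hj]; omega
        · simp only [Function.update_self]; omega
      have hSM0 : 0 ≤ ∑ k ∈ Finset.range (nm i), bartK p w P (d+1) (Function.update nm i k) n0 np :=
        Finset.sum_nonneg (fun k hk => (hMrec k hk).1)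
      have hSP0 : 0 ≤ ∑ k ∈ Finset.range (np i), bartK p w P (d+1) nm n0 (Function.update np i k) :=
        Finset.sum_nonneg (fun k hk => (hPrec k hk).1)
      have hSM1 : (∑ k ∈ Finset.range (nm i), bartK p w P (d+1) (Function.update nm i k) n0 np) ≤ (nm i : ℝ) := by
        calc _ ≤ ∑ k ∈ Finset.range (nm i), (1:ℝ) := Finset.sum_le_sum (fun k hk => (hMrec k hk).2)
        _ = (nm i : ℝ) := by simp
      have hSP1 : (∑ k ∈ Finset.range (np i), bartK p w P (d+1) nm n0 (Function.update np i k)) ≤ (np i : ℝ) := by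
        calc _ ≤ ∑ k ∈ Finset.range (np i), (1:ℝ) := Finset.sum_le_sum (fun k hk => (hPrec k hk).2)
        _ = (np i : ℝ) := by simp
      have hsum_le : (∑ k ∈ Finset.range (nm i), bartK p w P (d+1) (Function.update nm i k) n0 np) +
          (∑ k ∈ Finset.range (np i), bartK p w P (d+1) nm n0 (Function.update np i k))
          ≤ ((nm i + n0 i + np i : ℕ) : ℝ) := by
        push_cast
        have : (nm i : ℝ) + np i ≤ (nm i : ℝ) + n0 i + np i := by
          have : (0:ℝ) ≤ n0 i := by positivity
          linarith
        linarith
      have hdiv0 : 0 ≤ w i / ((nm i + n0 i + np i : ℕ) : ℝ) := div_nonneg (hw i).le hnpos.le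
      constructor
      · exact mul_nonneg hdiv0 (by linarith)
      · calc (w i / ((nm i + n0 i + np i : ℕ) : ℝ)) * _ ≤ (w i / ((nm i + n0 i + np i : ℕ) : ℝ)) * ((nm i + n0 i + np i : ℕ) : ℝ) := by
              apply mul_le_mul_of_nonneg_left hsum_le hdiv0
        _ = w i := div_mul_cancel₀ _ hnpos.ne'
    have hS0 : 0 ≤ ∑ i ∈ F, (w i / ((nm i + n0 i + np i : ℕ) : ℝ)) *
          ((∑ k ∈ Finset.range (nm i), bartK p w P (d+1) (Function.update nm i k) n0 np) +
           (∑ k ∈ Finset.range (np i), bartK p w P (d+1) nm n0 (Function.update np i k))) :=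
      Finset.sum_nonneg (fun i hi => (hterm i hi).1)
    have hSW : (∑ i ∈ F, (w i / ((nm i + n0 i + np i : ℕ) : ℝ)) *
          ((∑ k ∈ Finset.range (nm i), bartK p w P (d+1) (Function.update nm i k) n0 np) +
           (∑ k ∈ Finset.range (np i), bartK p w P (d+1) nm n0 (Function.update np i k))))
          ≤ bartW p w (fun i => nm i + n0 i + np i) :=
      Finset.sum_le_sum (fun i hi => (hterm i hi).2)
    have hPd := hP d
    rw [Set.mem_Icc] at hPd
    set S := ∑ i ∈ F, (w i / ((nm i + n0 i + np i : ℕ) : ℝ)) *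
          ((∑ k ∈ Finset.range (nm i), bartK p w P (d+1) (Function.update nm i k) n0 np) +
           (∑ k ∈ Finset.range (np i), bartK p w P (d+1) nm n0 (Function.update np i k)))
    set W := bartW p w (fun i => nm i + n0 i + np i)
    have hT0 : 0 ≤ 1 / W * S := by positivity
    have hT1 : 1 / W * S ≤ 1 := by
      rw [div_mul_eq_mul_div, one_mul, div_le_one hW]
      exact hSW
    constructor
    · nlinarith [hPd.1, hPd.2]
    · nlinarith [hPd.1, hPd.2]

lemma sum_pair_update_left (f g : Fin p → ℕ) (i : Fin p) (a : ℕ) :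
    (∑ j, (Function.update f i a j + g j)) + f i = (∑ j, (f j + g j)) + a := by
  have h1 : ∑ j, (Function.update f i a j + g j)
      = (∑ j, Function.update f i a j) + ∑ j, g j := Finset.sum_add_distrib
  have h2 : ∑ j, (f j + g j) = (∑ j, f j) + ∑ j, g j := Finset.sum_add_distrib
  have h3 : ∑ j, Function.update f i a j = a + ∑ j ∈ Finset.univ.erase i, f j := by
    rw [Finset.sum_update_of_mem (Finset.mem_univ i), Finset.sdiff_singleton_eq_erase]
  have h4 : f i + ∑ j ∈ Finset.univ.erase i, f j = ∑ j, f j :=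
    Finset.add_sum_erase _ f (Finset.mem_univ i)
  omega

lemma sum_pair_update_right (f g : Fin p → ℕ) (i : Fin p) (a : ℕ) :
    (∑ j, (g j + Function.update f i a j)) + f i = (∑ j, (g j + f j)) + a := by
  have h1 := sum_pair_update_left f g i a
  have e1 : ∑ j, (g j + Function.update f i a j) = ∑ j, (Function.update f i a j + g j) := by
    apply Finset.sum_congr rfl; intro j _; omega
  have e2 : ∑ j, (g j + f j) = ∑ j, (f j + g j) := by
    apply Finset.sum_congr rfl; intro j _; omega
  omega

lemma bartK_swap : ∀ N : ℕ, ∀ d nm n0 np, (∑ i, (nm i + np i)) = N →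
    bartK p w P d nm n0 np = bartK p w P d np n0 nm := by
  intro N
  induction N using Nat.strong_induction_on with
  | _ N IH =>
  intro d nm n0 np hN
  by_cases hz : ∀ i, nm i + n0 i + np i = 0
  · rw [bartK_eq_one _ _ _ _ hz, bartK_eq_one _ _ _ _ (fun i => by have := hz i; omega)]
  · have hz' : ¬ ∀ i, np i + n0 i + nm i = 0 := by
      intro h; exact hz (fun i => by have := h i; omega)
    rw [bartK_eq _ _ _ _ hz, bartK_eq _ _ _ _ hz']
    have hcomm : ∀ i, np i + n0 i + nm i = nm i + n0 i + np i := fun i => by omega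
    simp only [hcomm]
    congr 2
    congr 1
    congr 1
    apply Finset.sum_congr rfl
    intro i hi
    congr 1
    rw [add_comm]
    congr 1
    · apply Finset.sum_congr rfl
      intro k hk
      have hk' : k < np i := Finset.mem_range.mp hk
      exact IH (∑ j, (nm j + Function.update np i k j))
        (by have := sum_pair_update_right np nm i k; omega)
        _ _ _ _ rfl
    · apply Finset.sum_congr rfl
      intro k hk
      have hk' : k < nm i := Finset.mem_range.mp hk
      exact IH (∑ j, (Function.update nm i k j + np j))
        (by have := sum_pair_update_left nm np i k; omega)
        _ _ _ _ rfl

lemma bartK_step (hw : ∀ i, 0 < w i) (hP : ∀ d, P d ∈ Set.Icc (0:ℝ) 1)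
    (d : ℕ) (i : Fin p) (nm n0 np : Fin p → ℕ)
    (IH : ∀ d' (a' a b' b : Fin p → ℕ), (∀ j, a' j ≤ a j) → (∀ j, b' j ≤ b j) →
      (∑ j, (a j + b j)) ≤ ∑ j, (nm j + np j) →
      bartK p w P d' a' n0 b' ≤ bartK p w P d' a n0 b) :
    bartK p w P d nm n0 np ≤ bartK p w P d (Function.update nm i (nm i + 1)) n0 np := by
  set nm1 := Function.update nm i (nm i + 1) with hnm1
  have hnm1i : nm1 i = nm i + 1 := Function.update_self i _ nm
  have hnm1j : ∀ j, j ≠ i → nm1 j = nm j := fun j hj => Function.update_of_ne hj _ nm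
  have hY : ¬ ∀ j, nm1 j + n0 j + np j = 0 := by
    intro h; have := h i; omega
  have htot1 : ∑ j, (nm1 j + np j) = (∑ j, (nm j + np j)) + 1 := by
    have h := sum_pair_update_left nm np i (nm i + 1)
    rw [← hnm1] at h
    omega
  have hPd := hP d; rw [Set.mem_Icc] at hPd
  -- the generic inequality for coordinates j ≠ i
  have hmain_ne : ∀ j, j ≠ i → nm j + n0 j + np j ≠ 0 →
      (w j / ((nm j + n0 j + np j : ℕ):ℝ)) *
        ((∑ k ∈ Finset.range (nm j), bartK p w P (d+1) (Function.update nm j k) n0 np) +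
         (∑ k ∈ Finset.range (np j), bartK p w P (d+1) nm n0 (Function.update np j k)))
      ≤ (w j / ((nm1 j + n0 j + np j : ℕ):ℝ)) *
        ((∑ k ∈ Finset.range (nm1 j), bartK p w P (d+1) (Function.update nm1 j k) n0 np) +
         (∑ k ∈ Finset.range (np j), bartK p w P (d+1) nm1 n0 (Function.update np j k))) := by
    intro j hj hnj
    rw [hnm1j j hj]
    have hM : (∑ k ∈ Finset.range (nm j), bartK p w P (d+1) (Function.update nm j k) n0 np)
        ≤ ∑ k ∈ Finset.range (nm j), bartK p w P (d+1) (Function.update nm1 j k) n0 np := by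
      apply Finset.sum_le_sum
      intro k hk
      have hk' : k < nm j := Finset.mem_range.mp hk
      apply IH
      · intro l
        rcases eq_or_ne l j with rfl | hl
        · simp only [Function.update_self]; exact le_rfl
        · rw [Function.update_of_ne hl, Function.update_of_ne hl]
          rcases eq_or_ne l i with rfl | hli
          · omega
          · rw [hnm1j l hli]
      · intro l; exact le_refl _
      · have h1 := sum_pair_update_left nm1 np j k
        have h2 : nm1 j = nm j := hnm1j j hj
        omega
    have hPmono : (∑ k ∈ Finset.range (np j), bartK p w P (d+1) nm n0 (Function.update np j k))
        ≤ ∑ k ∈ Finset.range (np j), bartK p w P (d+1) nm1 n0 (Function.update np j k) := by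
      apply Finset.sum_le_sum
      intro k hk
      have hk' : k < np j := Finset.mem_range.mp hk
      apply IH
      · intro l
        rcases eq_or_ne l i with rfl | hli
        · omega
        · rw [hnm1j l hli]
      · intro l; exact le_refl _
      · have h1 := sum_pair_update_right np nm1 j k
        omega
    apply mul_le_mul_of_nonneg_left (add_le_add hM hPmono)
    have : (0:ℝ) < ((nm j + n0 j + np j : ℕ):ℝ) := by exact_mod_cast Nat.pos_of_ne_zero hnj
    exact div_nonneg (hw j).le this.le
  by_cases hz : ∀ j, nm j + n0 j + np j = 0
  · -- degenerate case : everything zero, both sides equal 1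
    rw [bartK_eq_one _ _ _ _ hz, bartK_eq _ _ _ _ hY]
    have hm0 : nm i = 0 := by have := hz i; omega
    have hFY : Finset.univ.filter (fun j => nm1 j + n0 j + np j ≠ 0) = {i} := by
      ext j
      simp only [Finset.mem_filter, Finset.mem_univ, true_and, Finset.mem_singleton]
      constructor
      · intro h
        by_contra hji
        exact h (by rw [hnm1j j hji]; exact hz j)
      · intro h; subst h; omega
    rw [hFY]
    have hupd : Function.update nm1 i 0 = nm := by
      funext l
      rcases eq_or_ne l i with rfl | hl
      · rw [Function.update_self]; omega
      · rw [Function.update_of_ne hl, hnm1j l hl]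
    have hone : bartK p w P (d+1) (Function.update nm1 i 0) n0 np = 1 := by
      rw [hupd]; exact bartK_eq_one _ _ _ _ hz
    have hnp0 : np i = 0 := by have := hz i; omega
    have hbW : bartW p w (fun j => nm1 j + n0 j + np j) = w i := by
      unfold bartW
      rw [show Finset.univ.filter (fun j => (fun l => nm1 l + n0 l + np l) j ≠ 0) = {i} from hFY]
      exact Finset.sum_singleton _ _
    have hsum : (w i / ((nm1 i + n0 i + np i : ℕ):ℝ)) *
          ((∑ k ∈ Finset.range (nm1 i), bartK p w P (d+1) (Function.update nm1 i k) n0 np) +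
           (∑ k ∈ Finset.range (np i), bartK p w P (d+1) nm1 n0 (Function.update np i k))) = w i := by
      have h1 : nm1 i + n0 i + np i = 1 := by have := hz i; omega
      rw [h1, hnm1i, hm0, hnp0]
      simp [hone]
    rw [Finset.sum_singleton, hsum, hbW]
    have hww : 1/(w i)*(w i) = 1 := one_div_mul_cancel (hw i).ne'
    rw [hww]
    norm_num
  · rw [bartK_eq _ _ _ _ hz, bartK_eq _ _ _ _ hY]
    have hkey : (1 / bartW p w (fun j => nm j + n0 j + np j)) *
        ∑ j ∈ Finset.univ.filter (fun j => nm j + n0 j + np j ≠ 0),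
          (w j / ((nm j + n0 j + np j : ℕ):ℝ)) *
            ((∑ k ∈ Finset.range (nm j), bartK p w P (d+1) (Function.update nm j k) n0 np) +
             (∑ k ∈ Finset.range (np j), bartK p w P (d+1) nm n0 (Function.update np j k)))
        ≤ (1 / bartW p w (fun j => nm1 j + n0 j + np j)) *
        ∑ j ∈ Finset.univ.filter (fun j => nm1 j + n0 j + np j ≠ 0),
          (w j / ((nm1 j + n0 j + np j : ℕ):ℝ)) *
            ((∑ k ∈ Finset.range (nm1 j), bartK p w P (d+1) (Function.update nm1 j k) n0 np) +
             (∑ k ∈ Finset.range (np j), bartK p w P (d+1) nm1 n0 (Function.update np j k))) := by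
      have hWdefY : bartW p w (fun j => nm1 j + n0 j + np j)
          = ∑ j ∈ Finset.univ.filter (fun j => nm1 j + n0 j + np j ≠ 0), w j := rfl
      have hWdefX : bartW p w (fun j => nm j + n0 j + np j)
          = ∑ j ∈ Finset.univ.filter (fun j => nm j + n0 j + np j ≠ 0), w j := rfl
      have hK := bartK_bounds hw hP _ (d+1) nm n0 np rfl
      set K := bartK p w P (d+1) nm n0 np with hKdef
      have htermK : ∀ j, nm j + n0 j + np j ≠ 0 →
          (w j / ((nm j + n0 j + np j : ℕ):ℝ)) *
            ((∑ k ∈ Finset.range (nm j), bartK p w P (d+1) (Function.update nm j k) n0 np) +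
             (∑ k ∈ Finset.range (np j), bartK p w P (d+1) nm n0 (Function.update np j k)))
          ≤ w j * K := by
        intro j hnj
        have hnpos : (0:ℝ) < ((nm j + n0 j + np j : ℕ):ℝ) := by
          exact_mod_cast Nat.pos_of_ne_zero hnj
        have hMK : ∀ k ∈ Finset.range (nm j),
            bartK p w P (d+1) (Function.update nm j k) n0 np ≤ K := by
          intro k hk
          have hk' : k < nm j := Finset.mem_range.mp hk
          apply IH
          · intro l
            rcases eq_or_ne l j with rfl | hl
            · rw [Function.update_self]; omega
            · rw [Function.update_of_ne hl]
          · intro l; exact le_rfl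
          · exact le_rfl
        have hPK : ∀ k ∈ Finset.range (np j),
            bartK p w P (d+1) nm n0 (Function.update np j k) ≤ K := by
          intro k hk
          have hk' : k < np j := Finset.mem_range.mp hk
          apply IH
          · intro l; exact le_rfl
          · intro l
            rcases eq_or_ne l j with rfl | hl
            · rw [Function.update_self]; omega
            · rw [Function.update_of_ne hl]
          · exact le_rfl
        have hSM : (∑ k ∈ Finset.range (nm j), bartK p w P (d+1) (Function.update nm j k) n0 np)
            ≤ (nm j : ℝ) * K := by
          calc _ ≤ ∑ _k ∈ Finset.range (nm j), K := Finset.sum_le_sum hMK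
          _ = (nm j : ℝ) * K := by
            rw [Finset.sum_const, Finset.card_range, nsmul_eq_mul]
        have hSP : (∑ k ∈ Finset.range (np j), bartK p w P (d+1) nm n0 (Function.update np j k))
            ≤ (np j : ℝ) * K := by
          calc _ ≤ ∑ _k ∈ Finset.range (np j), K := Finset.sum_le_sum hPK
          _ = (np j : ℝ) * K := by
            rw [Finset.sum_const, Finset.card_range, nsmul_eq_mul]
        have hmp : ((nm j : ℝ) + np j) ≤ ((nm j + n0 j + np j : ℕ):ℝ) := by
          push_cast
          have : (0:ℝ) ≤ (n0 j : ℝ) := by positivity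
          linarith
        have hsum : (∑ k ∈ Finset.range (nm j), bartK p w P (d+1) (Function.update nm j k) n0 np) +
            (∑ k ∈ Finset.range (np j), bartK p w P (d+1) nm n0 (Function.update np j k))
            ≤ ((nm j + n0 j + np j : ℕ):ℝ) * K := by
          nlinarith [mul_le_mul_of_nonneg_right hmp hK.1]
        calc (w j / ((nm j + n0 j + np j : ℕ):ℝ)) * _
            ≤ (w j / ((nm j + n0 j + np j : ℕ):ℝ)) * (((nm j + n0 j + np j : ℕ):ℝ) * K) :=
              mul_le_mul_of_nonneg_left hsum (div_nonneg (hw j).le hnpos.le)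
        _ = w j * K := by
          rw [← mul_assoc, div_mul_cancel₀ _ hnpos.ne']
      by_cases hni : nm i + n0 i + np i = 0
      · -- coordinate i was completely empty: the filter grows by i
        have hiFX : i ∉ Finset.univ.filter (fun j => nm j + n0 j + np j ≠ 0) := by
          simp only [Finset.mem_filter, Finset.mem_univ, true_and, ne_eq, not_not]
          omega
        have hFY : Finset.univ.filter (fun j => nm1 j + n0 j + np j ≠ 0)
            = insert i (Finset.univ.filter (fun j => nm j + n0 j + np j ≠ 0)) := by
          ext j
          simp only [Finset.mem_filter, Finset.mem_univ, true_and, Finset.mem_insert]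
          rcases eq_or_ne j i with rfl | hj
          · rw [hnm1i]
            constructor
            · intro _; exact Or.inl rfl
            · intro _; omega
          · rw [hnm1j j hj]
            constructor
            · intro h; exact Or.inr h
            · rintro (rfl | h)
              · exact absurd rfl hj
              · exact h
        have hterm_i : (w i / ((nm1 i + n0 i + np i : ℕ):ℝ)) *
            ((∑ k ∈ Finset.range (nm1 i), bartK p w P (d+1) (Function.update nm1 i k) n0 np) +
             (∑ k ∈ Finset.range (np i), bartK p w P (d+1) nm1 n0 (Function.update np i k)))
            = w i * K := by
          have h1 : nm1 i + n0 i + np i = 1 := by omega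
          have h2 : nm1 i = 1 := by omega
          have hnp0 : np i = 0 := by omega
          have hupd0 : Function.update nm1 i 0 = nm := by
            funext l
            rcases eq_or_ne l i with rfl | hl
            · rw [Function.update_self]; omega
            · rw [Function.update_of_ne hl, hnm1j l hl]
          rw [h1, h2, hnp0]
          simp [hupd0, Finset.sum_range_one, hKdef]
        rw [hWdefY, hWdefX, hFY, Finset.sum_insert hiFX, Finset.sum_insert hiFX, hterm_i]
        have hWX : (0:ℝ) < ∑ j ∈ Finset.univ.filter (fun j => nm j + n0 j + np j ≠ 0), w j := by
          have := bartW_pos hw (fun j => nm j + n0 j + np j) (by simpa using hz)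
          rw [hWdefX] at this
          exact this
        set WX := ∑ j ∈ Finset.univ.filter (fun j => nm j + n0 j + np j ≠ 0), w j
        set SX := ∑ j ∈ Finset.univ.filter (fun j => nm j + n0 j + np j ≠ 0),
          (w j / ((nm j + n0 j + np j : ℕ):ℝ)) *
            ((∑ k ∈ Finset.range (nm j), bartK p w P (d+1) (Function.update nm j k) n0 np) +
             (∑ k ∈ Finset.range (np j), bartK p w P (d+1) nm n0 (Function.update np j k)))
        set SY := ∑ j ∈ Finset.univ.filter (fun j => nm j + n0 j + np j ≠ 0),
          (w j / ((nm1 j + n0 j + np j : ℕ):ℝ)) *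
            ((∑ k ∈ Finset.range (nm1 j), bartK p w P (d+1) (Function.update nm1 j k) n0 np) +
             (∑ k ∈ Finset.range (np j), bartK p w P (d+1) nm1 n0 (Function.update np j k)))
        have hSXY : SX ≤ SY := by
          apply Finset.sum_le_sum
          intro j hj
          have hjne : j ≠ i := fun h => hiFX (h ▸ hj)
          have hnj : nm j + n0 j + np j ≠ 0 := by
            simpa using hj
          exact hmain_ne j hjne hnj
        have hSXK : SX ≤ WX * K := by
          calc SX ≤ ∑ j ∈ Finset.univ.filter (fun j => nm j + n0 j + np j ≠ 0), w j * K := by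
                apply Finset.sum_le_sum
                intro j hj
                exact htermK j (by simpa using hj)
          _ = WX * K := (Finset.sum_mul _ _ _).symm
        have hwi := hw i
        rw [div_mul_eq_mul_div, one_mul, div_mul_eq_mul_div, one_mul,
          div_le_div_iff₀ hWX (by linarith)]
        nlinarith [mul_le_mul_of_nonneg_left hSXK hwi.le, mul_le_mul_of_nonneg_left hSXY hWX.le]
      · -- coordinate i already active: same filter and weight
        have hFeq : Finset.univ.filter (fun j => nm1 j + n0 j + np j ≠ 0)
            = Finset.univ.filter (fun j => nm j + n0 j + np j ≠ 0) := by
          ext j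
          simp only [Finset.mem_filter, Finset.mem_univ, true_and]
          rcases eq_or_ne j i with rfl | hj
          · rw [hnm1i]; omega
          · rw [hnm1j j hj]
        have hWeq : bartW p w (fun j => nm1 j + n0 j + np j)
            = bartW p w (fun j => nm j + n0 j + np j) := by
          rw [hWdefY, hWdefX, hFeq]
        have hWX : (0:ℝ) < bartW p w (fun j => nm j + n0 j + np j) :=
          bartW_pos hw _ (by simpa using hz)
        rw [hWeq, hFeq]
        apply mul_le_mul_of_nonneg_left _ (by positivity)
        apply Finset.sum_le_sum
        intro j hj
        have hnj : nm j + n0 j + np j ≠ 0 := by simpa using hj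
        rcases eq_or_ne j i with rfl | hji
        · -- the crux: coordinate i itself
          have hupdk : ∀ k : ℕ, Function.update nm1 j k = Function.update nm j k := by
            intro k
            rw [hnm1]
            exact Function.update_idem _ _ _
          simp only [hupdk, hnm1i]
          rw [Finset.sum_range_succ, Function.update_eq_self]
          have hcast : ((nm j + 1 + n0 j + np j : ℕ):ℝ) = ((nm j + n0 j + np j : ℕ):ℝ) + 1 := by
            push_cast; ring
          rw [hcast]
          have hnpos : (0:ℝ) < ((nm j + n0 j + np j : ℕ):ℝ) := by
            exact_mod_cast Nat.pos_of_ne_zero hnj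
          set SA := ∑ k ∈ Finset.range (nm j), bartK p w P (d+1) (Function.update nm j k) n0 np
          set SB' := ∑ k ∈ Finset.range (np j), bartK p w P (d+1) nm n0 (Function.update np j k)
          set SB := ∑ k ∈ Finset.range (np j), bartK p w P (d+1) nm1 n0 (Function.update np j k)
          have hAK : SA ≤ (nm j : ℝ) * K := by
            calc SA ≤ ∑ _k ∈ Finset.range (nm j), K := by
                  apply Finset.sum_le_sum
                  intro k hk
                  have hk' : k < nm j := Finset.mem_range.mp hk
                  apply IH
                  · intro l
                    rcases eq_or_ne l j with rfl | hl
                    · rw [Function.update_self]; omega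
                    · rw [Function.update_of_ne hl]
                  · intro l; exact le_rfl
                  · exact le_rfl
            _ = (nm j : ℝ) * K := by
              rw [Finset.sum_const, Finset.card_range, nsmul_eq_mul]
          have hB'K : SB' ≤ (np j : ℝ) * K := by
            calc SB' ≤ ∑ _k ∈ Finset.range (np j), K := by
                  apply Finset.sum_le_sum
                  intro k hk
                  have hk' : k < np j := Finset.mem_range.mp hk
                  apply IH
                  · intro l; exact le_rfl
                  · intro l
                    rcases eq_or_ne l j with rfl | hl
                    · rw [Function.update_self]; omega
                    · rw [Function.update_of_ne hl]
                  · exact le_rfl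
            _ = (np j : ℝ) * K := by
              rw [Finset.sum_const, Finset.card_range, nsmul_eq_mul]
          have hB'B : SB' ≤ SB := by
            apply Finset.sum_le_sum
            intro k hk
            have hk' : k < np j := Finset.mem_range.mp hk
            apply IH
            · intro l
              rcases eq_or_ne l j with rfl | hl
              · rw [hnm1i]; omega
              · rw [hnm1j l hl]
            · intro l; exact le_rfl
            · have h1 := sum_pair_update_right np nm1 j k
              omega
          have hmp : ((nm j : ℝ) + np j) ≤ ((nm j + n0 j + np j : ℕ):ℝ) := by
            push_cast
            have : (0:ℝ) ≤ (n0 j : ℝ) := by positivity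
            linarith
          have key1 : SA + SB' ≤ ((nm j + n0 j + np j : ℕ):ℝ) * K := by
            nlinarith [mul_le_mul_of_nonneg_right hmp hK.1]
          have h2 : (SA + SB') * (((nm j + n0 j + np j : ℕ):ℝ) + 1)
              ≤ ((SA + K) + SB) * ((nm j + n0 j + np j : ℕ):ℝ) := by
            nlinarith [key1, mul_le_mul_of_nonneg_left hB'B hnpos.le]
          rw [div_mul_eq_mul_div, div_mul_eq_mul_div, div_le_div_iff₀ hnpos (by linarith)]
          nlinarith [mul_le_mul_of_nonneg_left h2 (hw j).le]
        · exact hmain_ne j hji hnj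
    nlinarith [hkey, hPd.1, hPd.2]

lemma bartK_mono_aux (hw : ∀ i, 0 < w i) (hP : ∀ d, P d ∈ Set.Icc (0:ℝ) 1) :
    ∀ N : ℕ, ∀ d (nm' nm n0 np' np : Fin p → ℕ),
      (∀ i, nm' i ≤ nm i) → (∀ i, np' i ≤ np i) → (∑ i, (nm i + np i)) ≤ N →
      bartK p w P d nm' n0 np' ≤ bartK p w P d nm n0 np := by
  intro N
  induction N using Nat.strong_induction_on with
  | _ N IH =>
  intro d nm' nm n0 np' np hm hp' htot
  by_cases heq : (∀ i, nm' i = nm i) ∧ (∀ i, np' i = np i)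
  · rw [funext heq.1, funext heq.2]
  · have hex : ∃ i, nm' i < nm i ∨ np' i < np i := by
      by_contra hc
      push_neg at hc
      refine heq ⟨fun i => ?_, fun i => ?_⟩ <;> have h1 := hc i <;>
        have h2 := hm i <;> have h3 := hp' i <;> omega
    obtain ⟨i, hi⟩ := hex
    have hNpos : 1 ≤ ∑ j, (nm j + np j) := by
      calc 1 ≤ nm i + np i := by omega
      _ ≤ ∑ j, (nm j + np j) :=
        Finset.single_le_sum (f := fun j => nm j + np j) (fun j _ => Nat.zero_le _)
          (Finset.mem_univ i)
    rcases hi with hlt | hlt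
    · set nmm := Function.update nm i (nm i - 1) with hnmm
      have hnmmi : nmm i = nm i - 1 := Function.update_self i _ nm
      have hnmmj : ∀ l, l ≠ i → nmm l = nm l := fun l hl => Function.update_of_ne hl _ nm
      have e1 : Function.update nmm i (nmm i + 1) = nm := by
        funext l
        rcases eq_or_ne l i with rfl | hl
        · rw [Function.update_self, hnmmi]; omega
        · rw [Function.update_of_ne hl, hnmmj l hl]
      have htotm : (∑ j, (nmm j + np j)) + 1 = ∑ j, (nm j + np j) := by
        have h := sum_pair_update_left nm np i (nm i - 1)
        rw [← hnmm] at h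
        omega
      have hIH' : ∀ d' (a' a b' b : Fin p → ℕ), (∀ j, a' j ≤ a j) → (∀ j, b' j ≤ b j) →
          (∑ j, (a j + b j)) ≤ ∑ j, (nmm j + np j) →
          bartK p w P d' a' n0 b' ≤ bartK p w P d' a n0 b := by
        intro d' a' a b' b h1 h2 h3
        exact IH (N-1) (by omega) d' a' a n0 b' b h1 h2 (by omega)
      have step := bartK_step hw hP d i nmm n0 np hIH'
      rw [e1] at step
      have first : bartK p w P d nm' n0 np' ≤ bartK p w P d nmm n0 np := by
        refine IH (N-1) (by omega) d nm' nmm n0 np' np (fun l => ?_) hp' (by omega)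
        rcases eq_or_ne l i with rfl | hl
        · rw [hnmmi]; have := hm l; omega
        · rw [hnmmj l hl]; exact hm l
      exact le_trans first step
    · set npm := Function.update np i (np i - 1) with hnpm
      have hnpmi : npm i = np i - 1 := Function.update_self i _ np
      have hnpmj : ∀ l, l ≠ i → npm l = np l := fun l hl => Function.update_of_ne hl _ np
      have e1 : Function.update npm i (npm i + 1) = np := by
        funext l
        rcases eq_or_ne l i with rfl | hl
        · rw [Function.update_self, hnpmi]; omega
        · rw [Function.update_of_ne hl, hnpmj l hl]
      have htotm : (∑ j, (nm j + npm j)) + 1 = ∑ j, (nm j + np j) := by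
        have h := sum_pair_update_right np nm i (np i - 1)
        rw [← hnpm] at h
        omega
      have hcomm : ∑ j, (npm j + nm j) = ∑ j, (nm j + npm j) :=
        Finset.sum_congr rfl (fun j _ => Nat.add_comm _ _)
      have hIH' : ∀ d' (a' a b' b : Fin p → ℕ), (∀ j, a' j ≤ a j) → (∀ j, b' j ≤ b j) →
          (∑ j, (a j + b j)) ≤ ∑ j, (npm j + nm j) →
          bartK p w P d' a' n0 b' ≤ bartK p w P d' a n0 b := by
        intro d' a' a b' b h1 h2 h3
        exact IH (N-1) (by omega) d' a' a n0 b' b h1 h2 (by omega)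
      have step := bartK_step hw hP d i npm n0 nm hIH'
      rw [e1] at step
      have s1 : bartK p w P d nm n0 npm = bartK p w P d npm n0 nm :=
        bartK_swap _ d nm n0 npm rfl
      have s2 : bartK p w P d np n0 nm = bartK p w P d nm n0 np :=
        bartK_swap _ d np n0 nm rfl
      have first : bartK p w P d nm' n0 np' ≤ bartK p w P d nm n0 npm := by
        refine IH (N-1) (by omega) d nm' nm n0 np' npm hm (fun l => ?_) (by omega)
        rcases eq_or_ne l i with rfl | hl
        · rw [hnpmi]; have := hp' l; omega
        · rw [hnpmj l hl]; exact hp' l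
      calc bartK p w P d nm' n0 np' ≤ bartK p w P d nm n0 npm := first
      _ = bartK p w P d npm n0 nm := s1
      _ ≤ bartK p w P d np n0 nm := step
      _ = bartK p w P d nm n0 np := s2

/-- Property 6 of Theorem 2: `k_d` is monotonically non-decreasing in the exterior
split counts `n⁻` and `n⁺`. -/
theorem bartK_mono_exterior
    (p : ℕ) (hp : 1 ≤ p) (w : Fin p → ℝ) (hw : ∀ i, 0 < w i)
    (P : ℕ → ℝ) (hP : ∀ d, P d ∈ Set.Icc (0 : ℝ) 1)
    (d : ℕ) (nm' nm n0 np' np : Fin p → ℕ)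
    (hm : ∀ i, nm' i ≤ nm i) (hpl : ∀ i, np' i ≤ np i) :
    bartK p w P d nm' n0 np' ≤ bartK p w P d nm n0 np :=
  bartK_mono_aux hw hP (∑ i, (nm i + np i)) d nm' nm n0 np' np hm hpl le_rfl
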